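/- Let n ≥ 2 be an integer and let r be the smallest prime divisor of n. Then there exists no homogeneous antisymmetric r-scheme on a set of n points. -/

import Mathlib

def Tup (V : Type*) (s : ℕ) : Type _ :=
  {f : Fin s → V // Function.Injective f}

def proj {V : Type*} {s : ℕ} (i : Fin (s + 1)) (v : Tup V (s + 1)) : Tup V s :=
  ⟨v.1 ∘ i.succAbove, v.2.comp Fin.succAbove_right_injective⟩

def permTup {V : Type*} {s : ℕ} (σ : Equiv.Perm (Fin s)) (v : Tup V s) : Tup V s :=
  ⟨v.1 ∘ σ, v.2.comp σ.injective⟩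

abbrev Colors (V : Type*) : Type _ := (s : ℕ) → Set (Set (Tup V s))

def IsMCollection {V : Type*} (m : ℕ) (P : Colors V) : Prop :=
  ∀ s, 1 ≤ s → s ≤ m → Setoid.IsPartition (P s)

def CompatibleAt {V : Type*} (P : Colors V) (s : ℕ) : Prop :=
  ∀ C ∈ P (s + 1), ∀ u ∈ C, ∀ v ∈ C, ∀ i : Fin (s + 1),
    ∃ Q ∈ P s, proj i u ∈ Q ∧ proj i v ∈ Q

def RegularAt {V : Type*} (P : Colors V) (s : ℕ) : Prop :=
  ∀ C ∈ P (s + 1), ∀ i : Fin (s + 1), ∀ Q ∈ P s, ∀ u ∈ Q, ∀ v ∈ Q,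
    {w ∈ C | proj i w = u}.ncard = {w ∈ C | proj i w = v}.ncard

def InvariantAt {V : Type*} (P : Colors V) (s : ℕ) : Prop :=
  ∀ C ∈ P s, ∀ σ : Equiv.Perm (Fin s), permTup σ '' C ∈ P s

def AntisymmetricAt {V : Type*} (P : Colors V) (s : ℕ) : Prop :=
  ∀ C ∈ P s, ∀ σ : Equiv.Perm (Fin s), σ ≠ 1 → permTup σ '' C ≠ C

def Homogeneous {V : Type*} (P : Colors V) : Prop :=
  ∃ C, P 1 = {C}

def IsMScheme {V : Type*} (m : ℕ) (P : Colors V) : Prop :=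
  IsMCollection m P ∧
    ∀ s, 1 ≤ s → s + 1 ≤ m →
      CompatibleAt P s ∧ RegularAt P s ∧ InvariantAt P (s + 1)

def AntisymmetricColl {V : Type*} (m : ℕ) (P : Colors V) : Prop :=
  ∀ s, 2 ≤ s → s ≤ m → AntisymmetricAt P s

def IsMatching {V : Type*} (P : Colors V) (s : ℕ) (C : Set (Tup V (s + 1))) : Prop :=
  C ∈ P (s + 1) ∧ ∃ i j : Fin (s + 1), i < j ∧ proj i '' C = proj j '' C ∧
    (proj i '' C).ncard = C.ncard

def HasMatching {V : Type*} (m : ℕ) (P : Colors V) : Prop :=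
  ∃ s, 1 ≤ s ∧ s + 1 ≤ m ∧ ∃ C, IsMatching P s C


/-! ### Auxiliary lemmas -/


lemma permTup_comp {V : Type*} {s : ℕ} (σ τ : Equiv.Perm (Fin s)) (v : Tup V s) :
    permTup σ (permTup τ v) = permTup (τ * σ) v := by
  apply Subtype.ext
  show (v.1 ∘ ⇑τ) ∘ ⇑σ = v.1 ∘ ⇑(τ * σ)
  rw [Equiv.Perm.coe_mul]
  rfl

lemma permTup_one {V : Type*} {s : ℕ} (v : Tup V s) :
    permTup (1 : Equiv.Perm (Fin s)) v = v := Subtype.ext rfl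

lemma permTup_one_image {V : Type*} {s : ℕ} (C : Set (Tup V s)) :
    permTup (1 : Equiv.Perm (Fin s)) '' C = C := by
  ext v; constructor
  · rintro ⟨u, hu, rfl⟩
    rw [permTup_one]; exact hu
  · intro hv; exact ⟨v, hv, permTup_one v⟩

lemma permTup_injective {V : Type*} {s : ℕ} (σ : Equiv.Perm (Fin s)) :
    Function.Injective (permTup (V := V) σ) := by
  intro a b h
  have h1 : a.1 ∘ ⇑σ = b.1 ∘ ⇑σ := congrArg Subtype.val h
  apply Subtype.ext
  funext x
  have h2 := congrFun h1 (σ.symm x)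
  simp only [Function.comp_apply, Equiv.apply_symm_apply] at h2
  exact h2

lemma permTup_pow_image {V : Type*} {s : ℕ} (ρ : Equiv.Perm (Fin s)) (k : ℕ)
    (C : Set (Tup V s)) :
    (fun D => permTup ρ '' D)^[k] C = permTup (ρ ^ k) '' C := by
  induction k with
  | zero =>
    simp only [Function.iterate_zero, id_eq, pow_zero]
    rw [permTup_one_image]
  | succ k ih =>
    rw [Function.iterate_succ_apply', ih, ← Set.image_comp]
    have : permTup (V := V) ρ ∘ permTup (ρ ^ k) = permTup (ρ ^ (k + 1)) := by
      funext v
      rw [Function.comp_apply, permTup_comp, pow_succ]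
    rw [this]

lemma orbit_sum {α : Type*} [DecidableEq α] (r : ℕ) (hr : 0 < r) (e : α → α) (g : α → ℕ)
    (hge : ∀ x, g (e x) = g x) :
    ∀ T : Finset α, (∀ x ∈ T, e x ∈ T) → (∀ x ∈ T, e^[r] x = x) →
      (∀ x ∈ T, ∀ k, 0 < k → k < r → e^[k] x ≠ x) → r ∣ ∑ x ∈ T, g x := by
  intro T
  induction T using Finset.strongInduction with
  | _ T ih =>
    intro hclosed hper hfree
    rcases T.eq_empty_or_nonempty with rfl | ⟨x, hx⟩
    · simp
    have hxk : ∀ k, e^[k] x ∈ T := by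
      intro k
      induction k with
      | zero => exact hx
      | succ k ihk => rw [Function.iterate_succ_apply']; exact hclosed _ ihk
    have hgk : ∀ k, g (e^[k] x) = g x := by
      intro k
      induction k with
      | zero => rfl
      | succ k ihk => rw [Function.iterate_succ_apply', hge]; exact ihk
    have hplus : ∀ m, e^[m + r] x = e^[m] x := by
      intro m
      rw [Function.iterate_add_apply, hper x hx]
    have hmod : ∀ m, e^[m] x = e^[m % r] x := by
      intro m
      induction m using Nat.strong_induction_on with
      | _ m ihm =>
        rcases Nat.lt_or_ge m r with h | h
        · rw [Nat.mod_eq_of_lt h]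
        · calc e^[m] x = e^[m - r + r] x := by rw [Nat.sub_add_cancel h]
            _ = e^[m - r] x := hplus _
            _ = e^[(m - r) % r] x := ihm _ (by omega)
            _ = e^[m % r] x := by rw [Nat.mod_eq_sub_mod h]
    set O : Finset α := (Finset.range r).image (fun k => e^[k] x) with hO
    have hinj : Set.InjOn (fun k => e^[k] x) (Finset.range r) := by
      intro a ha b hb hab
      dsimp only at hab
      simp only [Finset.coe_range, Set.mem_Iio] at ha hb
      by_contra hne
      rcases Nat.lt_or_ge a b with hlt | hge'
      · have h1 : e^[r - b + a] x = e^[r - b + b] x := by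
          rw [Function.iterate_add_apply, Function.iterate_add_apply, hab]
        rw [Nat.sub_add_cancel hb.le] at h1
        rw [hper x hx] at h1
        exact hfree x hx (r - b + a) (by omega) (by omega) h1
      · have hlt : b < a := lt_of_le_of_ne hge' (fun h => hne h.symm)
        have h1 : e^[r - a + b] x = e^[r - a + a] x := by
          rw [Function.iterate_add_apply, Function.iterate_add_apply, hab]
        rw [Nat.sub_add_cancel ha.le] at h1
        rw [hper x hx] at h1
        exact hfree x hx (r - a + b) (by omega) (by omega) h1
    have hOsub : O ⊆ T := by
      intro y hy
      simp only [hO, Finset.mem_image] at hy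
      obtain ⟨k, _, rfl⟩ := hy
      exact hxk k
    have hOsum : ∑ y ∈ O, g y = r * g x := by
      rw [hO, Finset.sum_image (fun a ha b hb => hinj ha hb)]
      rw [Finset.sum_congr rfl (fun k _ => hgk k), Finset.sum_const, Finset.card_range,
        smul_eq_mul]
    have hxO : x ∈ O := by
      simp only [hO, Finset.mem_image]
      exact ⟨0, Finset.mem_range.2 hr, rfl⟩
    have hssub : T \ O ⊂ T := Finset.sdiff_ssubset hOsub ⟨x, hxO⟩
    have hTO : ∀ y ∈ T \ O, e y ∈ T \ O := by
      intro y hy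
      rw [Finset.mem_sdiff] at hy ⊢
      refine ⟨hclosed y hy.1, ?_⟩
      intro hey
      apply hy.2
      simp only [hO, Finset.mem_image] at hey ⊢
      obtain ⟨k, hk, hek⟩ := hey
      have hy' : e^[r - 1 + k] x = y := by
        rw [Function.iterate_add_apply, hek, ← Function.iterate_succ_apply]
        rw [show (r - 1).succ = r from by omega]
        exact hper y hy.1
      refine ⟨(r - 1 + k) % r, Finset.mem_range.2 (Nat.mod_lt _ hr), ?_⟩
      rw [← hmod]
      exact hy'
    have hdvd1 := ih (T \ O) hssub hTO
      (fun y hy => hper y (Finset.mem_sdiff.1 hy).1)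
      (fun y hy => hfree y (Finset.mem_sdiff.1 hy).1)
    have hsum := Finset.sum_sdiff (f := g) hOsub
    rw [← hsum]
    exact dvd_add hdvd1 (hOsum ▸ dvd_mul_right r (g x))

instance {V : Type*} [Finite V] (s : ℕ) : Finite (Tup V s) :=
  Subtype.finite

lemma card_tup {V : Type*} [Fintype V] (s : ℕ) :
    Nat.card (Tup V s) = (Fintype.card V).descFactorial s := by
  classical
  have e : Tup V s ≃ (Fin s ↪ V) :=
    { toFun := fun v => ⟨v.1, v.2⟩
      invFun := fun f => ⟨f, f.injective⟩
      left_inv := fun v => rfl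
      right_inv := fun f => rfl }
  rw [Nat.card_congr e, Nat.card_eq_fintype_card, Fintype.card_embedding_eq,
    Fintype.card_fin]

lemma partition_sum {X : Type*} [Finite X] {P : Set (Set X)} (hP : Setoid.IsPartition P) :
    ∑ C ∈ (Set.toFinite P).toFinset, C.ncard = Nat.card X := by
  classical
  letI : Fintype X := Fintype.ofFinite X
  choose cl hcl using fun x : X => hP.2 x
  have hmap : ∀ x : X, x ∈ (Finset.univ : Finset X) → cl x ∈ (Set.toFinite P).toFinset :=
    fun x _ => (Set.Finite.mem_toFinset _).2 (hcl x).1.1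
  have h1 := Finset.card_eq_sum_card_fiberwise hmap
  have h2 : ∀ C ∈ (Set.toFinite P).toFinset,
      (Finset.univ.filter fun x => cl x = C).card = C.ncard := by
    intro C hC
    rw [Set.Finite.mem_toFinset] at hC
    have hset : ∀ x : X, cl x = C ↔ x ∈ C := by
      intro x
      constructor
      · rintro rfl; exact (hcl x).1.2
      · intro hx; exact ((hcl x).2 C ⟨hC, hx⟩).symm
    rw [Set.ncard_eq_toFinset_card _ (Set.toFinite C)]
    congr 1
    ext x
    simp [hset x, Set.Finite.mem_toFinset, Set.mem_setOf_eq]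
  rw [Finset.sum_congr rfl h2] at h1
  rw [← h1, Finset.card_univ, Nat.card_eq_fintype_card]

/-- If `r` is the smallest prime divisor of `n = |V| ≥ 2`, there is no
homogeneous antisymmetric `r`-scheme on `V`. -/
theorem stmt8 {V : Type*} [Fintype V] (n r : ℕ) (hn : 2 ≤ n)
    (hcard : Fintype.card V = n)
    (hr : r.Prime) (hrd : r ∣ n) (hmin : ∀ p, p.Prime → p ∣ n → r ≤ p)
    (P : Colors V) :
    ¬ (IsMScheme r P ∧ Homogeneous P ∧ AntisymmetricColl r P) := by
  rintro ⟨hScheme, hHom, hAnti⟩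
  classical
  have hr2 : 2 ≤ r := hr.two_le
  have hn0 : 0 < n := by omega
  have hrn : r ≤ n := Nat.le_of_dvd hn0 hrd
  -- every color at level `s + 1 ≤ r` has cardinality divisible by `n`
  have key : ∀ s : ℕ, s + 1 ≤ r → ∀ C ∈ P (s + 1), n ∣ C.ncard := by
    intro s
    induction s with
    | zero =>
      intro _ C hC
      obtain ⟨C₀, hC₀⟩ := hHom
      have hC' : C = C₀ := by rw [hC₀] at hC; exact hC
      have hpart := hScheme.1 1 le_rfl (by omega)
      have huniv : C₀ = Set.univ := by
        apply Set.eq_univ_of_univ_subset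
        intro x _
        obtain ⟨b, ⟨hbP, hxb⟩, -⟩ := hpart.2 x
        rw [hC₀] at hbP
        rw [← Set.mem_singleton_iff.1 hbP]
        exact hxb
      have hcard1 := card_tup (V := V) 1
      rw [hcard] at hcard1
      rw [hC', huniv, Set.ncard_univ, hcard1, Nat.descFactorial_one]
    | succ s ihs =>
      intro hsr C hC
      have hpart1 := hScheme.1 (s + 2) (by omega) hsr
      have hpart0 := hScheme.1 (s + 1) (by omega) (by omega)
      obtain ⟨hcomp, hreg, -⟩ := hScheme.2 (s + 1) (by omega) hsr
      have hCne : C.Nonempty := by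
        rw [Set.nonempty_iff_ne_empty]
        intro h
        exact hpart1.1 (h ▸ hC)
      obtain ⟨u₀, hu₀⟩ := hCne
      have i : Fin (s + 2) := 0
      obtain ⟨Q₀, ⟨hQ₀P, hQ₀m⟩, hQ₀u⟩ := hpart0.2 (proj i u₀)
      have hmaps : ∀ u ∈ C, proj i u ∈ Q₀ := by
        intro u hu
        obtain ⟨Q, hQP, h1, h2⟩ := hcomp C hC u₀ hu₀ u hu i
        rwa [hQ₀u Q ⟨hQP, h1⟩] at h2
      have hCfin : C.Finite := Set.toFinite _
      have hQfin : Q₀.Finite := Set.toFinite _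
      have hmap' : ∀ w ∈ hCfin.toFinset, proj i w ∈ hQfin.toFinset := by
        intro w hw
        rw [Set.Finite.mem_toFinset] at hw ⊢
        exact hmaps w hw
      have hcount := Finset.card_eq_sum_card_fiberwise hmap'
      set c := {w ∈ C | proj i w = proj i u₀}.ncard with hc
      have hfib : ∀ q ∈ hQfin.toFinset,
          (hCfin.toFinset.filter fun w => proj i w = q).card = c := by
        intro q hq
        rw [Set.Finite.mem_toFinset] at hq
        have h1 := hreg C hC i Q₀ hQ₀P q hq (proj i u₀) hQ₀m
        rw [hc, ← h1, Set.ncard_eq_toFinset_card _ (Set.toFinite _)]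
        congr 1
        ext w
        simp [Set.Finite.mem_toFinset, Set.mem_setOf_eq]
      have hCcard : C.ncard = Q₀.ncard * c := by
        rw [Set.ncard_eq_toFinset_card _ hCfin, hcount,
          Finset.sum_congr rfl hfib, Finset.sum_const, smul_eq_mul,
          ← Set.ncard_eq_toFinset_card _ hQfin]
      rw [hCcard]
      exact Dvd.dvd.mul_right (ihs (by omega) Q₀ hQ₀P) c
  -- a permutation of order r (Cauchy)
  haveI : Fact r.Prime := ⟨hr⟩
  obtain ⟨ρ, hρ⟩ : ∃ ρ : Equiv.Perm (Fin r), orderOf ρ = r := by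
    apply exists_prime_orderOf_dvd_card r
    rw [Fintype.card_perm, Fintype.card_fin]
    exact Nat.dvd_factorial (by omega) le_rfl
  have hinv : InvariantAt P r := by
    have h := (hScheme.2 (r - 1) (by omega) (by omega)).2.2
    rwa [Nat.sub_add_cancel (by omega : 1 ≤ r)] at h
  have hanti : AntisymmetricAt P r := hAnti r hr2 le_rfl
  set e : Set (Tup V r) → Set (Tup V r) := fun C => permTup ρ '' C with he
  set T := (Set.toFinite (P r)).toFinset with hT
  have hclosed : ∀ C ∈ T, e C ∈ T := by
    intro C hC
    rw [hT, Set.Finite.mem_toFinset] at hC ⊢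
    exact hinv C hC ρ
  have hper : ∀ C ∈ T, e^[r] C = C := by
    intro C _
    rw [he, permTup_pow_image]
    have hone : ρ ^ r = 1 := by
      have h := pow_orderOf_eq_one ρ
      rwa [hρ] at h
    rw [hone, permTup_one_image]
  have hfree : ∀ C ∈ T, ∀ k, 0 < k → k < r → e^[k] C ≠ C := by
    intro C hCT k hk1 hk2
    rw [he, permTup_pow_image]
    rw [hT, Set.Finite.mem_toFinset] at hCT
    apply hanti C hCT (ρ ^ k)
    intro h
    have hdk := orderOf_dvd_of_pow_eq_one h
    rw [hρ] at hdk
    have := Nat.le_of_dvd hk1 hdk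
    omega
  have hsum : ∑ C ∈ T, C.ncard = n.descFactorial r := by
    rw [hT, partition_sum (hScheme.1 r (by omega) le_rfl), card_tup, hcard]
  have hdvd2 : r ∣ ∑ C ∈ T, C.ncard / n := by
    apply orbit_sum r (by omega) e (fun C => C.ncard / n) ?_ T hclosed hper hfree
    intro C
    show (e C).ncard / n = C.ncard / n
    rw [he]
    show (permTup ρ '' C).ncard / n = C.ncard / n
    rw [Set.ncard_image_of_injective C (permTup_injective ρ)]
  have hdivall : ∀ C ∈ T, n ∣ C.ncard := by
    intro C hC
    rw [hT, Set.Finite.mem_toFinset] at hC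
    have h := key (r - 1) (by omega)
    rw [Nat.sub_add_cancel (by omega : 1 ≤ r)] at h
    exact h C hC
  have hsum2 : ∑ C ∈ T, C.ncard = n * ∑ C ∈ T, C.ncard / n := by
    rw [Finset.mul_sum]
    apply Finset.sum_congr rfl
    intro C hC
    exact (Nat.mul_div_cancel' (hdivall C hC)).symm
  obtain ⟨z, hz⟩ := hdvd2
  have hfinal : n.descFactorial r = n * (r * z) := by rw [← hsum, hsum2, hz]
  have hdesc : n.descFactorial r = n * (n - 1).descFactorial (r - 1) := by
    obtain ⟨n', hn'⟩ : ∃ n', n = n' + 1 := ⟨n - 1, by omega⟩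
    obtain ⟨r', hr'⟩ : ∃ r', r = r' + 1 := ⟨r - 1, by omega⟩
    subst hn' hr'
    rw [Nat.succ_descFactorial_succ]
    simp
  have h2 : r * z = (n - 1).descFactorial (r - 1) :=
    Nat.eq_of_mul_eq_mul_left hn0 (hfinal.symm.trans hdesc)
  have hrdvd : r ∣ (n - 1).descFactorial (r - 1) := ⟨z, h2.symm⟩
  rw [Nat.descFactorial_eq_prod_range] at hrdvd
  obtain ⟨i, hiR, hidvd⟩ := (Nat.Prime.prime hr).exists_mem_finset_dvd hrdvd
  rw [Finset.mem_range] at hiR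
  have h3 : r ∣ n - (n - 1 - i) := Nat.dvd_sub hrd hidvd
  have h4 : n - (n - 1 - i) = i + 1 := by omega
  rw [h4] at h3
  have := Nat.le_of_dvd (by omega) h3
  omega
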